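/- With F(z) = Σ_{n odd} σ_1(n)·q^n and q = e^{2πi(x+iy)}, one has |F(x+iy)| ≤ 1.0001·e^{−2πy} for all real x and all y ≥ √3/2. -/

import Mathlib

open Real Complex

lemma aux_sq_le_two_pow : ∀ n : ℕ, 4 ≤ n → n * n ≤ 2 ^ n := by
  intro n hn
  induction n with
  | zero => omega
  | succ k ih =>
    rcases Nat.lt_or_ge k 4 with h | h
    · interval_cases k <;> simp_all
    · have h1 := ih (by omega)
      have h2 : 2 * k + 1 ≤ k * k := by nlinarith
      calc (k+1) * (k+1) = k * k + (2*k+1) := by ring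
        _ ≤ 2^k + 2^k := by omega
        _ = 2^(k+1) := by ring

lemma aux_sigma_le (n : ℕ) : (∑ d ∈ n.divisors, d) ≤ 2 ^ n := by
  rcases Nat.lt_or_ge n 4 with h | h
  · interval_cases n <;> decide
  · have hsub : n.divisors ⊆ Finset.Icc 1 n := by
      intro d hd
      rw [Nat.mem_divisors] at hd
      rw [Finset.mem_Icc]
      exact ⟨Nat.pos_of_dvd_of_pos hd.1 (by omega), Nat.le_of_dvd (by omega) hd.1⟩
    calc (∑ d ∈ n.divisors, d) ≤ n.divisors.card * n := by
          apply Finset.sum_le_card_nsmul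
          intro d hd
          exact Nat.le_of_dvd (by omega) (Nat.mem_divisors.mp hd).1
      _ ≤ n * n := by
          have := Finset.card_le_card hsub
          simp [Nat.card_Icc] at this
          exact Nat.mul_le_mul_right _ this
      _ ≤ 2 ^ n := aux_sq_le_two_pow n h

set_option maxHeartbeats 1000000 in
theorem stmt_18 (x y : ℝ) (hy : Real.sqrt 3 / 2 ≤ y) :
    ‖∑' n : ℕ, if Odd n then
        ((∑ d ∈ n.divisors, d : ℕ) : ℂ) *
          Complex.exp (2 * Real.pi * Complex.I * (n : ℂ) * (x + y * Complex.I))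
      else 0‖
      ≤ 1.0001 * Real.exp (-2 * Real.pi * y) := by
  set r : ℝ := Real.exp (-(2 * Real.pi * y)) with hr_def
  have hr0 : 0 < r := Real.exp_pos _
  -- bound r ≤ 1/210
  have hsqrt3 : (1.7320508 : ℝ) ≤ Real.sqrt 3 := by
    have h := Real.sq_sqrt (show (0:ℝ) ≤ 3 by norm_num)
    nlinarith [Real.sqrt_nonneg 3]
  have hpi : (3.141592 : ℝ) < Real.pi := Real.pi_gt_d6
  have h2piy : (5.4413 : ℝ) ≤ 2 * Real.pi * y := by nlinarith [Real.sqrt_nonneg 3]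
  have hexp5 : (148.41 : ℝ) ≤ Real.exp 5 := by
    have h := Real.exp_one_gt_d9
    have h5 : Real.exp 5 = (Real.exp 1) ^ (5:ℕ) := by
      rw [← Real.exp_nat_mul]; norm_num
    rw [h5]
    calc (148.41:ℝ) ≤ 2.7182818283 ^ (5:ℕ) := by norm_num
      _ ≤ _ := by apply pow_le_pow_left₀ (by norm_num) h.le
  have hexp210 : (210 : ℝ) ≤ Real.exp 5.4413 := by
    have : Real.exp 5.4413 = Real.exp 5 * Real.exp 0.4413 := by
      rw [← Real.exp_add]; norm_num
    have h04 : (1.4413 : ℝ) ≤ Real.exp 0.4413 := by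
      have := Real.add_one_le_exp (0.4413 : ℝ); linarith
    rw [this]
    nlinarith [Real.exp_pos (0.4413:ℝ)]
  have hr : r ≤ 1 / 210 := by
    have h1 : r ≤ Real.exp (-(5.4413)) := by
      apply Real.exp_le_exp.mpr; linarith
    have h2 : Real.exp (-(5.4413)) = (Real.exp 5.4413)⁻¹ := by
      rw [Real.exp_neg]
    rw [h2] at h1
    have : (Real.exp 5.4413)⁻¹ ≤ 1 / 210 := by
      rw [inv_le_comm₀ (by positivity) (by norm_num)] at *
      · linarith
    linarith
  have h2r : 2 * r < 1 := by linarith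
  -- the summand and its norm
  set f : ℕ → ℂ := fun n => if Odd n then
      ((∑ d ∈ n.divisors, d : ℕ) : ℂ) *
        Complex.exp (2 * Real.pi * Complex.I * (n : ℂ) * (x + y * Complex.I))
    else 0 with hf_def
  have habs : ∀ n : ℕ,
      ‖Complex.exp (2 * Real.pi * Complex.I * (n : ℂ) * (x + y * Complex.I))‖
      = r ^ n := by
    intro n
    rw [Complex.norm_exp, hr_def, ← Real.exp_nat_mul]
    congr 1
    simp [Complex.mul_re, Complex.mul_im, Complex.add_re, Complex.add_im]
    ring
  have hnorm : ∀ n : ℕ, ‖f n‖ =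
      (if Odd n then ((∑ d ∈ n.divisors, d : ℕ) : ℝ) else 0) * r ^ n := by
    intro n
    by_cases hodd : Odd n
    · simp only [hf_def, hodd, if_true]
      rw [norm_mul, Complex.norm_natCast, habs n]
    · simp [hf_def, hodd]
  have hle : ∀ n : ℕ, ‖f n‖ ≤ (2 * r) ^ n := by
    intro n
    rw [hnorm n]
    by_cases hodd : Odd n
    · simp only [hodd, if_true]
      rw [mul_pow]
      apply mul_le_mul_of_nonneg_right _ (by positivity)
      calc ((∑ d ∈ n.divisors, d : ℕ) : ℝ) ≤ ((2 ^ n : ℕ) : ℝ) := by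
            exact_mod_cast aux_sigma_le n
        _ = 2 ^ n := by push_cast; ring
    · simp only [hodd, if_false, zero_mul]
      positivity
  have hgeom : Summable (fun n : ℕ => (2 * r) ^ n) :=
    summable_geometric_of_lt_one (by positivity) h2r
  have hsumnorm : Summable (fun n : ℕ => ‖f n‖) :=
    Summable.of_nonneg_of_le (fun n => norm_nonneg _) hle hgeom
  clear hf_def
  clear_value f
  have habs_le : ‖∑' n, f n‖ ≤ ∑' n, ‖f n‖ := by
    exact norm_tsum_le_tsum_norm hsumnorm
  -- split off first four terms
  have hsplit : (∑' n, ‖f n‖) =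
      (∑ i ∈ Finset.range 4, ‖f i‖) + ∑' n, ‖f (n + 4)‖ :=
    (Summable.sum_add_tsum_nat_add 4 hsumnorm).symm
  have hhead : (∑ i ∈ Finset.range 4, ‖f i‖) = r + 4 * r ^ 3 := by
    rw [Finset.sum_range_succ, Finset.sum_range_succ, Finset.sum_range_succ,
      Finset.sum_range_one, hnorm 0, hnorm 1, hnorm 2, hnorm 3]
    simp only [show ¬ Odd 0 by decide, show Odd 1 by decide, show ¬ Odd 2 by decide,
      show Odd 3 by decide, if_true, if_false]
    rw [show (∑ d ∈ (1:ℕ).divisors, d) = 1 by decide,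
      show (∑ d ∈ (3:ℕ).divisors, d) = 4 by decide]
    push_cast; ring
  have htail : (∑' n : ℕ, ‖f (n + 4)‖) ≤ (2 * r) ^ 4 * (1 - 2 * r)⁻¹ := by
    have h1 : (∑' n : ℕ, ‖f (n + 4)‖) ≤ ∑' n : ℕ, (2 * r) ^ (n + 4) := by
      apply Summable.tsum_le_tsum (fun n => hle (n + 4))
      · exact (summable_nat_add_iff 4).mpr hsumnorm
      · exact (summable_nat_add_iff 4).mpr hgeom
    have h2 : (∑' n : ℕ, (2 * r) ^ (n + 4)) = (2 * r) ^ 4 * (1 - 2 * r)⁻¹ := by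
      have : ∀ n : ℕ, (2 * r) ^ (n + 4) = (2 * r) ^ 4 * (2 * r) ^ n := fun n => by ring
      rw [tsum_congr this, tsum_mul_left, tsum_geometric_of_lt_one (by positivity) h2r]
    linarith
  -- numeric finish
  have hinv : (1 - 2 * r)⁻¹ ≤ 2 := by
    rw [inv_le_comm₀ (by linarith) (by norm_num)]
    linarith
  have hfinal : r + 4 * r ^ 3 + (2 * r) ^ 4 * (1 - 2 * r)⁻¹ ≤ 1.0001 * r := by
    have ht : (2 * r) ^ 4 * (1 - 2 * r)⁻¹ ≤ 32 * r ^ 4 := by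
      have h4 : (0:ℝ) ≤ (2 * r) ^ 4 := by positivity
      nlinarith [mul_le_mul_of_nonneg_left hinv h4]
    have hr2 : r ^ 2 ≤ (1/210:ℝ) ^ 2 := pow_le_pow_left₀ hr0.le hr 2
    have hr3 : r ^ 3 ≤ (1/210:ℝ) ^ 3 := pow_le_pow_left₀ hr0.le hr 3
    have A : r ^ 3 ≤ (1/210:ℝ) ^ 2 * r := by nlinarith
    have B : r ^ 4 ≤ (1/210:ℝ) ^ 3 * r := by nlinarith
    nlinarith
  have hRHS : Real.exp (-2 * Real.pi * y) = r := by rw [hr_def]; ring_nf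
  rw [hRHS]
  calc ‖∑' n, f n‖ ≤ ∑' n, ‖f n‖ := habs_le
    _ = (∑ i ∈ Finset.range 4, ‖f i‖) + ∑' n, ‖f (n + 4)‖ := hsplit
    _ ≤ (r + 4 * r ^ 3) + (2 * r) ^ 4 * (1 - 2 * r)⁻¹ := by
        rw [hhead]; linarith [htail]
    _ ≤ 1.0001 * r := by linarith [hfinal]
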